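/- Let f : Ω → ℝ where Ω ⊂ ℝ² and suppose Δf ≥ 0 in the interior of a bounded domain Ω, f is continuous on the closure, and f ≤ 0 on ∂Ω. Then for the specific barrier f = ψ_y² - A(r-y) + B(r-y)², where ψ is C² with Δψ_y = -ω'(ψ)ψ_y, |ψ_y|²|ω'(ψ)| ≤ B in Ω, one has Δf ≥ 2|∇ψ_y|² ≥ 0 in Ω; consequently by the maximum principle ψ_y² ≤ A(r-y) - B(r-y)² ≤ A(r-y) throughout Ω. -/

import Mathlib

open Real

/-- Partial derivative in the first variable. -/
noncomputable def pd1 (f : ℝ → ℝ → ℝ) : ℝ → ℝ → ℝ := fun x y => deriv (fun x' => f x' y) x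

/-- Partial derivative in the second variable. -/
noncomputable def pd2 (f : ℝ → ℝ → ℝ) : ℝ → ℝ → ℝ := fun x y => deriv (fun y' => f x y') y

/-- Laplacian of a function of two real variables. -/
noncomputable def lap (f : ℝ → ℝ → ℝ) : ℝ → ℝ → ℝ :=
  fun x y => pd1 (pd1 f) x y + pd2 (pd2 f) x y

open Filter Topology Set

lemma hasDerivAt_line1 {g : ℝ × ℝ → ℝ} {x y : ℝ} (hg : DifferentiableAt ℝ g (x, y)) :
    HasDerivAt (fun x' => g (x', y)) (fderiv ℝ g (x, y) (1, 0)) x := by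
  have h := hg.hasFDerivAt.comp_hasDerivAt x ((hasDerivAt_id x).prodMk (hasDerivAt_const x y))
  exact h

lemma hasDerivAt_line2 {g : ℝ × ℝ → ℝ} {x y : ℝ} (hg : DifferentiableAt ℝ g (x, y)) :
    HasDerivAt (fun y' => g (x, y')) (fderiv ℝ g (x, y) (0, 1)) y := by
  have h := hg.hasFDerivAt.comp_hasDerivAt y ((hasDerivAt_const y x).prodMk (hasDerivAt_id y))
  exact h

lemma pd1_eq {h : ℝ → ℝ → ℝ} {x y : ℝ}
    (hg : DifferentiableAt ℝ (Function.uncurry h) (x, y)) :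
    pd1 h x y = fderiv ℝ (Function.uncurry h) (x, y) (1, 0) :=
  (hasDerivAt_line1 hg).deriv

lemma pd2_eq {h : ℝ → ℝ → ℝ} {x y : ℝ}
    (hg : DifferentiableAt ℝ (Function.uncurry h) (x, y)) :
    pd2 h x y = fderiv ℝ (Function.uncurry h) (x, y) (0, 1) :=
  (hasDerivAt_line2 hg).deriv

lemma contDiff_fderiv_apply {g : ℝ × ℝ → ℝ} {n m : WithTop ℕ∞} (v : ℝ × ℝ)
    (hg : ContDiff ℝ n g) (hmn : m + 1 ≤ n) :
    ContDiff ℝ m (fun p => fderiv ℝ g p v) :=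
  (hg.fderiv_right hmn).clm_apply contDiff_const

lemma fderiv_fderiv_apply {g : ℝ × ℝ → ℝ} {n : WithTop ℕ∞} (v w : ℝ × ℝ) (p : ℝ × ℝ)
    (hg : ContDiff ℝ n g) (hn : 2 ≤ n) :
    fderiv ℝ (fun q => fderiv ℝ g q v) p w = fderiv ℝ (fderiv ℝ g) p w v := by
  rw [fderiv_clm_apply ((hg.fderiv_right (m := 1) (by
      exact le_trans (by norm_num) hn)).differentiable one_ne_zero p) (differentiableAt_const v)]
  simp

lemma fderiv_fderiv_symm {g : ℝ × ℝ → ℝ} {n : WithTop ℕ∞} (hg : ContDiff ℝ n g)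
    (hn : 2 ≤ n) (p v w : ℝ × ℝ) :
    fderiv ℝ (fderiv ℝ g) p v w = fderiv ℝ (fderiv ℝ g) p w v :=
  (hg.contDiffAt.isSymmSndFDerivAt (by simpa using hn)).eq v w

lemma deriv_diffble_of_contDiff2 {h : ℝ → ℝ} (hh : ContDiff ℝ 2 h) :
    Differentiable ℝ (deriv h) := by
  have h1 : ContDiff ℝ 1 (fun x => fderiv ℝ h x 1) :=
    (hh.fderiv_right (by norm_num)).clm_apply contDiff_const
  have : deriv h = fun x => fderiv ℝ h x 1 := by funext x; rw [fderiv_apply_one_eq_deriv]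
  rw [this]; exact h1.differentiable one_ne_zero

lemma sd_test {h : ℝ → ℝ} (hh : ContDiff ℝ 2 h) {a : ℝ} (hm : IsLocalMax h a) :
    deriv (deriv h) a ≤ 0 := by
  by_contra hL
  push_neg at hL
  have hd1 : Differentiable ℝ h := hh.differentiable two_ne_zero
  have hd2 : Differentiable ℝ (deriv h) := deriv_diffble_of_contDiff2 hh
  have h'a : deriv h a = 0 := hm.deriv_eq_zero
  have hL' : HasDerivAt (deriv h) (deriv (deriv h) a) a := (hd2 a).hasDerivAt
  rw [hasDerivAt_iff_tendsto_slope] at hL'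
  have h1 : ∀ᶠ x in 𝓝[≠] a, 0 < slope (deriv h) a x := hL'.eventually (eventually_gt_nhds hL)
  have hev : ∀ᶠ x in 𝓝[>] a, 0 < deriv h x := by
    filter_upwards [h1.filter_mono (nhdsWithin_mono a fun x hx => ne_of_gt hx),
      self_mem_nhdsWithin] with x hx hx'
    have hxa : 0 < x - a := sub_pos.2 hx'
    have hsl : slope (deriv h) a x = deriv h x / (x - a) := by
      rw [slope_def_field, h'a]; ring
    rw [hsl] at hx
    have := mul_pos hx hxa
    rwa [div_mul_cancel₀ _ (ne_of_gt hxa)] at this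
  obtain ⟨b, hb, hsub⟩ := mem_nhdsGT_iff_exists_Ioo_subset.mp hev
  have hm2 : ∀ᶠ x in 𝓝[>] a, h x ≤ h a := hm.filter_mono nhdsWithin_le_nhds
  obtain ⟨x, hx1, hx2⟩ := (hm2.and (Filter.eventually_mem_set.2 (Ioo_mem_nhdsGT hb))).exists
  have hmono : StrictMonoOn h (Icc a x) := by
    apply strictMonoOn_of_deriv_pos (convex_Icc a x) hd1.continuous.continuousOn
    intro z hz
    rw [interior_Icc] at hz
    exact hsub ⟨hz.1, hz.2.trans hx2.2⟩
  have : h a < h x := hmono (left_mem_Icc.2 hx2.1.le) (right_mem_Icc.2 hx2.1.le) hx2.1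
  linarith

lemma maxp (Ω : Set (ℝ × ℝ)) (hopen : IsOpen Ω) (hbdd : Bornology.IsBounded Ω)
    (F : ℝ × ℝ → ℝ) (hF : ContDiff ℝ 2 F)
    (hsub : ∀ p ∈ Ω,
      0 ≤ deriv (deriv (fun x => F (x, p.2))) p.1 + deriv (deriv (fun y => F (p.1, y))) p.2)
    (hbd : ∀ p ∈ frontier Ω, F p ≤ 0) :
    ∀ p ∈ Ω, F p ≤ 0 := by
  intro q hq
  obtain ⟨R, hR⟩ := (Metric.isBounded_iff_subset_closedBall 0).mp hbdd
  have hE : (0:ℝ) < Real.exp R := Real.exp_pos R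
  suffices hsuf : ∀ ε > 0, F q ≤ ε * Real.exp R by
    by_contra hFq
    push_neg at hFq
    have h2 := hsuf (F q / (2 * Real.exp R)) (by positivity)
    have h3 : F q / (2 * Real.exp R) * Real.exp R = F q / 2 := by
      field_simp
    rw [h3] at h2
    linarith
  intro ε hε
  set G : ℝ × ℝ → ℝ := fun p => F p + ε * Real.exp p.1 with hGdef
  have hG2 : ContDiff ℝ 2 G :=
    hF.add (contDiff_const.mul (Real.contDiff_exp.comp contDiff_fst))
  have hcl : IsCompact (closure Ω) := hbdd.isCompact_closure
  obtain ⟨p, hpcl, hpmax⟩ :=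
    hcl.exists_isMaxOn ⟨q, subset_closure hq⟩ (hG2.continuous.continuousOn)
  by_cases hpΩ : p ∈ Ω
  · exfalso
    have hloc : IsLocalMax G p :=
      hpmax.isLocalMax (mem_nhds_iff.2 ⟨Ω, subset_closure, hopen, hpΩ⟩)
    have hline1 : IsLocalMax (fun x => G (x, p.2)) p.1 := by
      have ht : Tendsto (fun x : ℝ => (x, p.2)) (𝓝 p.1) (𝓝 p) := by
        have := (continuous_id.prodMk (continuous_const (y := p.2))).tendsto p.1
        simpa using this
      have h5 := ht.eventually hloc
      simpa [IsLocalMax, IsMaxFilter] using h5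
    have hline2 : IsLocalMax (fun y => G (p.1, y)) p.2 := by
      have ht : Tendsto (fun y : ℝ => (p.1, y)) (𝓝 p.2) (𝓝 p) := by
        have := ((continuous_const (y := p.1)).prodMk continuous_id).tendsto p.2
        simpa using this
      have h5 := ht.eventually hloc
      simpa [IsLocalMax, IsMaxFilter] using h5
    have hFl1 : ∀ y : ℝ, ContDiff ℝ 2 (fun x => F (x, y)) := fun y =>
      hF.comp (contDiff_id.prodMk contDiff_const)
    have hGl1 : ContDiff ℝ 2 (fun x => G (x, p.2)) :=
      hG2.comp (contDiff_id.prodMk contDiff_const)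
    have hGl2 : ContDiff ℝ 2 (fun y => G (p.1, y)) :=
      hG2.comp (contDiff_const.prodMk contDiff_id)
    have hd1 : deriv (deriv (fun x => G (x, p.2))) p.1
        = deriv (deriv (fun x => F (x, p.2))) p.1 + ε * Real.exp p.1 := by
      have he : deriv (fun x => G (x, p.2)) = fun x =>
          deriv (fun x' => F (x', p.2)) x + ε * Real.exp x := by
        funext x
        exact ((((hFl1 p.2).differentiable two_ne_zero x).hasDerivAt).add
          ((Real.hasDerivAt_exp x).const_mul ε)).deriv
      rw [he]
      exact (((deriv_diffble_of_contDiff2 (hFl1 p.2)) p.1).hasDerivAt.add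
        ((Real.hasDerivAt_exp p.1).const_mul ε)).deriv
    have hd2 : deriv (deriv (fun y => G (p.1, y))) p.2
        = deriv (deriv (fun y => F (p.1, y))) p.2 := by
      have he : deriv (fun y => G (p.1, y)) = deriv (fun y => F (p.1, y)) := by
        funext y
        show deriv (fun y' => F (p.1, y') + ε * Real.exp p.1) y = _
        rw [deriv_add_const]
      rw [he]
    have t1 := sd_test hGl1 hline1
    have t2 := sd_test hGl2 hline2
    have := hsub p hpΩ
    rw [hd1] at t1
    rw [hd2] at t2
    nlinarith [Real.exp_pos p.1]
  · have hpf : p ∈ frontier Ω := by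
      rw [hopen.frontier_eq]; exact ⟨hpcl, hpΩ⟩
    have h1 : F p ≤ 0 := hbd p hpf
    have h2 : G q ≤ G p := hpmax (subset_closure hq)
    have h3 : p.1 ≤ R := by
      have := closure_minimal hR Metric.isClosed_closedBall hpcl
      rw [Metric.mem_closedBall, dist_zero_right] at this
      calc p.1 ≤ |p.1| := le_abs_self _
        _ = ‖p.1‖ := (Real.norm_eq_abs _).symm
        _ ≤ ‖p‖ := norm_fst_le p
        _ ≤ R := this
    have h4 : G p ≤ ε * Real.exp R := by
      have := Real.exp_le_exp.2 h3
      simp only [hGdef]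
      nlinarith
    have h5 : F q ≤ G q := by
      simp only [hGdef]
      nlinarith [Real.exp_pos q.1]
    linarith

theorem stmt_19 (r A B : ℝ) (Ω : Set (ℝ × ℝ))
    (hΩopen : IsOpen Ω) (hΩbdd : Bornology.IsBounded Ω)
    (hΩbelow : ∀ p ∈ Ω, p.2 < r)
    (ψ : ℝ → ℝ → ℝ) (ω : ℝ → ℝ)
    (hψ : ContDiff ℝ 3 (Function.uncurry ψ)) (hω : ContDiff ℝ 1 ω)
    (hpde : ∀ p ∈ Ω, lap ψ p.1 p.2 + ω (ψ p.1 p.2) = 0)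
    (hB : ∀ p ∈ Ω, (pd2 ψ p.1 p.2) ^ 2 * |deriv ω (ψ p.1 p.2)| ≤ B)
    (f : ℝ → ℝ → ℝ)
    (hf : ∀ x y : ℝ, f x y = (pd2 ψ x y) ^ 2 - A * (r - y) + B * (r - y) ^ 2)
    (hbdry : ∀ p ∈ frontier Ω, f p.1 p.2 ≤ 0) :
    (∀ p ∈ Ω,
      lap f p.1 p.2 ≥ 2 * ((pd1 (pd2 ψ) p.1 p.2) ^ 2 + (pd2 (pd2 ψ) p.1 p.2) ^ 2) ∧
      lap f p.1 p.2 ≥ 0) ∧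
    (∀ p ∈ Ω,
      (pd2 ψ p.1 p.2) ^ 2 ≤ A * (r - p.2) - B * (r - p.2) ^ 2 ∧
      (pd2 ψ p.1 p.2) ^ 2 ≤ A * (r - p.2)) := by
  have h23 : (2 : WithTop ℕ∞) ≤ 3 := by norm_num
  have h213 : (2 : WithTop ℕ∞) + 1 ≤ 3 := by norm_num
  set g : ℝ × ℝ → ℝ := Function.uncurry ψ with hgdef
  have hg3 : ContDiff ℝ 3 g := hψ
  have hgd : Differentiable ℝ g := hg3.differentiable (by norm_num)
  set u : ℝ × ℝ → ℝ := fun p => fderiv ℝ g p (0, 1) with hudef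
  set u₁ : ℝ × ℝ → ℝ := fun p => fderiv ℝ g p (1, 0) with hu₁def
  have hu2 : ContDiff ℝ 2 u := contDiff_fderiv_apply _ hg3 h213
  have hu₁2 : ContDiff ℝ 2 u₁ := contDiff_fderiv_apply _ hg3 h213
  have hud : Differentiable ℝ u := hu2.differentiable two_ne_zero
  have hu₁d : Differentiable ℝ u₁ := hu₁2.differentiable two_ne_zero
  set U1 : ℝ × ℝ → ℝ := fun p => fderiv ℝ u p (1, 0) with hU1def
  set U2 : ℝ × ℝ → ℝ := fun p => fderiv ℝ u p (0, 1) with hU2def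
  set V11 : ℝ × ℝ → ℝ := fun p => fderiv ℝ u₁ p (1, 0) with hV11def
  have hU1c : ContDiff ℝ 1 U1 := contDiff_fderiv_apply _ hu2 (by norm_num)
  have hU2c : ContDiff ℝ 1 U2 := contDiff_fderiv_apply _ hu2 (by norm_num)
  have hV11c : ContDiff ℝ 1 V11 := contDiff_fderiv_apply _ hu₁2 (by norm_num)
  have hU1d : Differentiable ℝ U1 := hU1c.differentiable one_ne_zero
  have hU2d : Differentiable ℝ U2 := hU2c.differentiable one_ne_zero
  have hV11d : Differentiable ℝ V11 := hV11c.differentiable one_ne_zero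
  set U11 : ℝ × ℝ → ℝ := fun p => fderiv ℝ U1 p (1, 0) with hU11def
  set U22 : ℝ × ℝ → ℝ := fun p => fderiv ℝ U2 p (0, 1) with hU22def
  -- basic identifications
  have hpd2ψ : ∀ x y : ℝ, pd2 ψ x y = u (x, y) := fun x y => pd2_eq (hgd (x, y))
  have hpd1ψ : ∀ x y : ℝ, pd1 ψ x y = u₁ (x, y) := fun x y => pd1_eq (hgd (x, y))
  have hpd12 : ∀ x y : ℝ, pd1 (pd2 ψ) x y = U1 (x, y) := by
    intro x y
    show deriv (fun x' => pd2 ψ x' y) x = _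
    have he : (fun x' => pd2 ψ x' y) = fun x' => u (x', y) := funext fun x' => hpd2ψ x' y
    rw [he]
    exact (hasDerivAt_line1 (hud (x, y))).deriv
  have hpd22 : ∀ x y : ℝ, pd2 (pd2 ψ) x y = U2 (x, y) := by
    intro x y
    show deriv (fun y' => pd2 ψ x y') y = _
    have he : (fun y' => pd2 ψ x y') = fun y' => u (x, y') := funext fun y' => hpd2ψ x y'
    rw [he]
    exact (hasDerivAt_line2 (hud (x, y))).deriv
  have hpd11ψ : ∀ x y : ℝ, pd1 (pd1 ψ) x y = V11 (x, y) := by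
    intro x y
    show deriv (fun x' => pd1 ψ x' y) x = _
    have he : (fun x' => pd1 ψ x' y) = fun x' => u₁ (x', y) := funext fun x' => hpd1ψ x' y
    rw [he]
    exact (hasDerivAt_line1 (hu₁d (x, y))).deriv
  -- the commutation of derivatives (Clairaut)
  have hsymg := fderiv_fderiv_symm hg3 h23
  have hsymu₁ := fderiv_fderiv_symm hu₁2 le_rfl
  have hu₁u : (fun q => fderiv ℝ u₁ q (0, 1)) = U1 := by
    funext q
    have e1 : fderiv ℝ u₁ q (0, 1) = fderiv ℝ (fderiv ℝ g) q (0, 1) (1, 0) :=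
      fderiv_fderiv_apply (1, 0) (0, 1) q hg3 h23
    have e2 : fderiv ℝ u q (1, 0) = fderiv ℝ (fderiv ℝ g) q (1, 0) (0, 1) :=
      fderiv_fderiv_apply (0, 1) (1, 0) q hg3 h23
    show fderiv ℝ u₁ q (0, 1) = fderiv ℝ u q (1, 0)
    rw [e1, e2]
    exact hsymg q _ _
  have hcomm : ∀ p : ℝ × ℝ, fderiv ℝ V11 p (0, 1) = U11 p := by
    intro p
    have e1 : fderiv ℝ V11 p (0, 1) = fderiv ℝ (fderiv ℝ u₁) p (0, 1) (1, 0) :=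
      fderiv_fderiv_apply (1, 0) (0, 1) p hu₁2 le_rfl
    have e2 : fderiv ℝ (fun q => fderiv ℝ u₁ q (0, 1)) p (1, 0)
        = fderiv ℝ (fderiv ℝ u₁) p (1, 0) (0, 1) :=
      fderiv_fderiv_apply (0, 1) (1, 0) p hu₁2 le_rfl
    rw [e1, hsymu₁ p, ← e2, hu₁u]
  -- the PDE, rewritten
  have hpde' : ∀ p ∈ Ω, V11 p + U2 p + ω (g p) = 0 := by
    intro p hp
    have h0 := hpde p hp
    have : lap ψ p.1 p.2 = V11 p + U2 p := by
      show pd1 (pd1 ψ) p.1 p.2 + pd2 (pd2 ψ) p.1 p.2 = _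
      rw [hpd11ψ, hpd22]
    rw [this] at h0
    have hgp : ψ p.1 p.2 = g p := rfl
    rw [hgp] at h0
    exact h0
  -- differentiating the PDE in the y-direction
  have hkey : ∀ p ∈ Ω, U11 p + U22 p + deriv ω (g p) * u p = 0 := by
    rintro ⟨x, y⟩ hp
    have hnb : ∀ᶠ y' in 𝓝 y, (x, y') ∈ Ω := by
      have hc : Continuous (fun y' : ℝ => (x, y')) := continuous_const.prodMk continuous_id
      have := hc.continuousAt (x := y) |>.preimage_mem_nhds (hΩopen.mem_nhds hp)
      exact this
    have hΦ0 : (fun y' => V11 (x, y') + U2 (x, y') + ω (g (x, y'))) =ᶠ[𝓝 y]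
        (fun _ => (0 : ℝ)) := by
      filter_upwards [hnb] with y' hy'
      exact hpde' _ hy'
    have hder0 : deriv (fun y' => V11 (x, y') + U2 (x, y') + ω (g (x, y'))) y = 0 := by
      rw [hΦ0.deriv_eq]
      simp
    have h1 : HasDerivAt (fun y' => V11 (x, y')) (fderiv ℝ V11 (x, y) (0, 1)) y :=
      hasDerivAt_line2 (hV11d (x, y))
    have h2 : HasDerivAt (fun y' => U2 (x, y')) (U22 (x, y)) y :=
      hasDerivAt_line2 (hU2d (x, y))
    have h3 : HasDerivAt (fun y' => g (x, y')) (u (x, y)) y := hasDerivAt_line2 (hgd (x, y))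
    have h4 : HasDerivAt ω (deriv ω (g (x, y))) (g (x, y)) :=
      ((hω.differentiable one_ne_zero) _).hasDerivAt
    have h5 : HasDerivAt (fun y' => ω (g (x, y'))) (deriv ω (g (x, y)) * u (x, y)) y :=
      h4.comp y h3
    have h6 : HasDerivAt (fun y' => V11 (x, y') + U2 (x, y') + ω (g (x, y'))) _ y :=
      (h1.add h2).add h5
    rw [h6.deriv] at hder0
    rw [hcomm (x, y)] at hder0
    exact hder0
  -- derivatives of f
  have hf' : ∀ x y : ℝ, f x y = (u (x, y)) ^ 2 - A * (r - y) + B * (r - y) ^ 2 := by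
    intro x y; rw [hf, hpd2ψ]
  have hpd1f : ∀ x y : ℝ, pd1 f x y = 2 * u (x, y) * U1 (x, y) := by
    intro x y
    show deriv (fun x' => f x' y) x = _
    have he : (fun x' => f x' y) = fun x' => (u (x', y)) ^ 2 - A * (r - y) + B * (r - y) ^ 2 :=
      funext fun x' => hf' x' y
    rw [he]
    have h1 : HasDerivAt (fun x' => u (x', y)) (U1 (x, y)) x := hasDerivAt_line1 (hud (x, y))
    have h2 : HasDerivAt (fun x' => (u (x', y)) ^ 2 - A * (r - y) + B * (r - y) ^ 2) _ x :=
      ((h1.pow 2).sub_const (A * (r - y))).add_const (B * (r - y) ^ 2)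
    rw [h2.deriv]
    ring
  have hpd11f : ∀ x y : ℝ, pd1 (pd1 f) x y = 2 * U1 (x, y) ^ 2 + 2 * u (x, y) * U11 (x, y) := by
    intro x y
    show deriv (fun x' => pd1 f x' y) x = _
    have he : (fun x' => pd1 f x' y) = fun x' => 2 * u (x', y) * U1 (x', y) :=
      funext fun x' => hpd1f x' y
    rw [he]
    have h1 : HasDerivAt (fun x' => u (x', y)) (U1 (x, y)) x := hasDerivAt_line1 (hud (x, y))
    have h2 : HasDerivAt (fun x' => U1 (x', y)) (U11 (x, y)) x := hasDerivAt_line1 (hU1d (x, y))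
    have h3 := (h1.mul h2).const_mul (2 : ℝ)
    have h4 : HasDerivAt (fun x' => 2 * u (x', y) * U1 (x', y))
        (2 * (U1 (x, y) * U1 (x, y) + u (x, y) * U11 (x, y))) x := by
      refine h3.congr_of_eventuallyEq (Filter.Eventually.of_forall fun z => ?_)
      simp only [Pi.mul_apply, Pi.sub_apply]
      ring
    rw [h4.deriv]
    ring
  have hpd2f : ∀ x y : ℝ, pd2 f x y = 2 * u (x, y) * U2 (x, y) + A - 2 * B * (r - y) := by
    intro x y
    show deriv (fun y' => f x y') y = _
    have he : (fun y' => f x y') = fun y' => (u (x, y')) ^ 2 - A * (r - y') + B * (r - y') ^ 2 :=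
      funext fun y' => hf' x y'
    rw [he]
    have h1 : HasDerivAt (fun y' => u (x, y')) (U2 (x, y)) y := hasDerivAt_line2 (hud (x, y))
    have hry : HasDerivAt (fun y' : ℝ => r - y') (-1) y := by
      simpa using (hasDerivAt_id y).const_sub r
    have h2 : HasDerivAt (fun y' => (u (x, y')) ^ 2 - A * (r - y') + B * (r - y') ^ 2) _ y :=
      ((h1.pow 2).sub ((hry.const_mul A))).add ((hry.pow 2).const_mul B)
    rw [h2.deriv]
    ring
  have hpd22f : ∀ x y : ℝ,
      pd2 (pd2 f) x y = 2 * U2 (x, y) ^ 2 + 2 * u (x, y) * U22 (x, y) + 2 * B := by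
    intro x y
    show deriv (fun y' => pd2 f x y') y = _
    have he : (fun y' => pd2 f x y') =
        fun y' => 2 * u (x, y') * U2 (x, y') + A - 2 * B * (r - y') :=
      funext fun y' => hpd2f x y'
    rw [he]
    have h1 : HasDerivAt (fun y' => u (x, y')) (U2 (x, y)) y := hasDerivAt_line2 (hud (x, y))
    have h2 : HasDerivAt (fun y' => U2 (x, y')) (U22 (x, y)) y := hasDerivAt_line2 (hU2d (x, y))
    have hry : HasDerivAt (fun y' : ℝ => r - y') (-1) y := by
      simpa using (hasDerivAt_id y).const_sub r
    have h3 := (((h1.mul h2).const_mul (2 : ℝ)).add_const A).sub (hry.const_mul (2 * B))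
    have h4 : HasDerivAt (fun y' => 2 * u (x, y') * U2 (x, y') + A - 2 * B * (r - y'))
        (2 * (U2 (x, y) * U2 (x, y) + u (x, y) * U22 (x, y)) - 2 * B * -1) y := by
      refine h3.congr_of_eventuallyEq (Filter.Eventually.of_forall fun z => ?_)
      simp only [Pi.mul_apply, Pi.sub_apply]
      ring
    rw [h4.deriv]
    ring
  have hlapf : ∀ x y : ℝ, lap f x y =
      2 * U1 (x, y) ^ 2 + 2 * u (x, y) * U11 (x, y)
        + (2 * U2 (x, y) ^ 2 + 2 * u (x, y) * U22 (x, y) + 2 * B) := by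
    intro x y
    show pd1 (pd1 f) x y + pd2 (pd2 f) x y = _
    rw [hpd11f, hpd22f]
  -- Part 1
  have part1 : ∀ p ∈ Ω,
      lap f p.1 p.2 ≥ 2 * ((pd1 (pd2 ψ) p.1 p.2) ^ 2 + (pd2 (pd2 ψ) p.1 p.2) ^ 2) ∧
      lap f p.1 p.2 ≥ 0 := by
    rintro ⟨x, y⟩ hp
    have hk := hkey (x, y) hp
    have hb := hB (x, y) hp
    rw [hpd2ψ] at hb
    have habs : deriv ω (g (x, y)) ≤ |deriv ω (g (x, y))| := le_abs_self _
    have hsq : (0 : ℝ) ≤ u (x, y) ^ 2 := sq_nonneg _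
    have hgp : ψ x y = g (x, y) := rfl
    rw [hgp] at hb
    have hmul : u (x, y) ^ 2 * deriv ω (g (x, y)) ≤ B :=
      le_trans (mul_le_mul_of_nonneg_left habs hsq) hb
    have hlf := hlapf x y
    have hg1 : lap f x y ≥ 2 * (U1 (x, y) ^ 2 + U2 (x, y) ^ 2) := by
      rw [hlf]
      have hk2 : u (x, y) * U11 (x, y) + u (x, y) * U22 (x, y)
          = -(deriv ω (g (x, y)) * u (x, y) ^ 2) := by linear_combination u (x, y) * hk
      linarith [hmul, hk2]
    constructor
    · simp only [hpd12, hpd22]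
      exact hg1
    · have := sq_nonneg (U1 (x, y))
      have := sq_nonneg (U2 (x, y))
      linarith
  refine ⟨part1, ?_⟩
  -- Part 2 : maximum principle
  have hFc2 : ContDiff ℝ 2 (Function.uncurry f) := by
    have he : Function.uncurry f = fun p : ℝ × ℝ =>
        (u p) ^ 2 - A * (r - p.2) + B * (r - p.2) ^ 2 := by
      funext p
      obtain ⟨x, y⟩ := p
      exact hf' x y
    rw [he]
    exact ((hu2.pow 2).sub (contDiff_const.mul (contDiff_const.sub contDiff_snd))).add
      (contDiff_const.mul ((contDiff_const.sub contDiff_snd).pow 2))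
  have hmaxle : ∀ p ∈ Ω, Function.uncurry f p ≤ 0 := by
    apply maxp Ω hΩopen hΩbdd _ hFc2
    · intro p hp
      exact (part1 p hp).2
    · intro p hp
      exact hbdry p hp
  rintro p hp
  have hle := hmaxle p hp
  have hfp : Function.uncurry f p = (pd2 ψ p.1 p.2) ^ 2 - A * (r - p.2) + B * (r - p.2) ^ 2 :=
    hf p.1 p.2
  rw [hfp] at hle
  have hB0 : (0 : ℝ) ≤ B := le_trans (by positivity) (hB p hp)
  have hBr : (0 : ℝ) ≤ B * (r - p.2) ^ 2 := by positivity
  constructor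
  · linarith
  · linarith
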